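/- Every finite locally branched lattice L is coatomic: every element p of L equals the infimum of the set of coatoms of L above p. -/

import Mathlib

private lemma exists_cov_le {L : Type*} [CompleteLattice L] [Fintype L]
    {a b : L} (h : a < b) : ∃ x : L, a ⋖ x ∧ x ≤ b := by
  classical
  obtain ⟨x, hxmem, hx⟩ := (Finset.univ.filter (fun x : L => a < x ∧ x ≤ b)).exists_minimal
    ⟨b, by simp [h]⟩
  simp only [Finset.mem_filter, Finset.mem_univ, true_and] at hxmem hx
  exact ⟨x, ⟨hxmem.1, fun c hac hcx => hcx.not_ge (hx ⟨hac, hcx.le.trans hxmem.2⟩ hcx.le)⟩, hxmem.2⟩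

/-- Every finite locally branched lattice is coatomic: every element is the
infimum of the coatoms (elements covered by `⊤`) above it. -/
theorem locallyBranched_coatomic
    {L : Type*} [CompleteLattice L] [Fintype L]
    (hlb : ∀ a b c : L, a ⋖ b → b ⋖ c → ∃ d : L, d ≠ b ∧ a < d ∧ d < c) :
    ∀ p : L, p = sInf {c : L | c ⋖ ⊤ ∧ p ≤ c} := by
  have wf : WellFounded ((· > ·) : L → L → Prop) := wellFounded_gt
  intro p
  induction p using wf.induction with
  | _ p ih =>
  rcases eq_or_lt_of_le (le_top : p ≤ ⊤) with htop | hlt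
  · rw [htop]
    have hempty : {c : L | c ⋖ ⊤ ∧ (⊤ : L) ≤ c} = ∅ := by
      ext c
      simp only [Set.mem_setOf_eq, Set.mem_empty_iff_false, iff_false, not_and]
      exact fun hc hle => absurd hle hc.lt.not_ge
    rw [hempty, sInf_empty]
  · by_cases hco : p ⋖ ⊤
    · exact le_antisymm (le_sInf fun c hc => hc.2) (sInf_le ⟨hco, le_rfl⟩)
    · obtain ⟨b, hpb, -⟩ := exists_cov_le hlt
      have hbtop : b < ⊤ := lt_of_le_of_ne le_top (by rintro rfl; exact hco hpb)
      obtain ⟨c, hbc, -⟩ := exists_cov_le hbtop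
      obtain ⟨d, hdb, hpd, hdc⟩ := hlb p b c hpb hbc
      obtain ⟨e, hpe, hed⟩ := exists_cov_le hpd
      have heb : e ≠ b := by
        rintro rfl
        have hbd : e < d := lt_of_le_of_ne hed (fun h => hdb h.symm)
        exact hbc.2 hbd hdc
      have hbe : b ⊓ e = p := by
        by_contra hne
        have h1 : p < b ⊓ e := lt_of_le_of_ne (le_inf hpb.lt.le hpe.lt.le)
          (fun h => hne h.symm)
        have h2 : b ⊓ e = b := by
          by_contra hne2
          exact hpb.2 h1 (lt_of_le_of_ne inf_le_left hne2)
        have hble : b ≤ e := h2 ▸ inf_le_right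
        have : b = e := by
          by_contra hne3
          exact hpe.2 hpb.lt (lt_of_le_of_ne hble hne3)
        exact heb this.symm
      have ihb := ih b hpb.lt
      have ihe := ih e hpe.lt
      refine le_antisymm (le_sInf fun c hc => hc.2) ?_
      have hsb : sInf {c : L | c ⋖ ⊤ ∧ p ≤ c} ≤ b := by
        calc sInf {c : L | c ⋖ ⊤ ∧ p ≤ c} ≤ sInf {c : L | c ⋖ ⊤ ∧ b ≤ c} :=
              sInf_le_sInf (fun c hc => ⟨hc.1, hpb.lt.le.trans hc.2⟩)
          _ = b := ihb.symm
      have hse : sInf {c : L | c ⋖ ⊤ ∧ p ≤ c} ≤ e := by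
        calc sInf {c : L | c ⋖ ⊤ ∧ p ≤ c} ≤ sInf {c : L | c ⋖ ⊤ ∧ e ≤ c} :=
              sInf_le_sInf (fun c hc => ⟨hc.1, hpe.lt.le.trans hc.2⟩)
          _ = e := ihe.symm
      calc sInf {c : L | c ⋖ ⊤ ∧ p ≤ c} ≤ b ⊓ e := le_inf hsb hse
        _ = p := hbe
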